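/- Let R = k[[x,y]]/(y^2 - x^3) (an ordinary cusp) over a field k. Then every finitely generated torsion-free rank-1 R-module is isomorphic either to R or to the maximal ideal (x,y). -/

import Mathlib

/-!
STATEMENT 2: Let `R = k[[x,y]]/(y² - x³)` (an ordinary cusp) over a field `k`.  Then
every finitely generated torsion-free rank-1 `R`-module is isomorphic either to `R` or
to the maximal ideal `(x, y)`.

Torsion-free: no nonzero element of `M` is killed by a non-zerodivisor of `R`.  Rank 1:
the base change of `M` to the fraction field `K = Frac R` is one-dimensional; this is
expressed via `IsLocalizedModule` for an arbitrary realization `(K, MK)` of the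
fraction field and of `M ⊗_R K`.
-/

set_option synthInstance.maxHeartbeats 1000000
set_option maxHeartbeats 1000000

noncomputable section

/-- The ordinary cusp `k[[x,y]]/(y² - x³)`. -/
abbrev CuspRing (k : Type) [Field k] : Type :=
  MvPowerSeries (Fin 2) k ⧸
    (Ideal.span {(MvPowerSeries.X 1 ^ 2 - MvPowerSeries.X 0 ^ 3 : MvPowerSeries (Fin 2) k)})

/-- The image of `x` in `k[[x,y]]/(y² - x³)`. -/
abbrev cuspX (k : Type) [Field k] : CuspRing k :=
  Ideal.Quotient.mk _ (MvPowerSeries.X 0)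

/-- The image of `y` in `k[[x,y]]/(y² - x³)`. -/
abbrev cuspY (k : Type) [Field k] : CuspRing k :=
  Ideal.Quotient.mk _ (MvPowerSeries.X 1)

open PowerSeries


namespace CuspAux

variable (k : Type) [Field k]

/-- weight of a monomial exponent -/
def w (d : Fin 2 →₀ ℕ) : ℕ := 2 * d 0 + 3 * d 1

/-- the exponent (a, b) -/
def fs (a b : ℕ) : Fin 2 →₀ ℕ := Finsupp.single 0 a + Finsupp.single 1 b

@[simp] lemma fs_apply0 (a b : ℕ) : fs a b 0 = a := by simp [fs]
@[simp] lemma fs_apply1 (a b : ℕ) : fs a b 1 = b := by simp [fs]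

lemma eq_fs (d : Fin 2 →₀ ℕ) : d = fs (d 0) (d 1) := by
  ext i
  fin_cases i <;> simp [fs]

lemma w_fs (a b : ℕ) : w (fs a b) = 2 * a + 3 * b := by simp [w]

lemma w_add (d e : Fin 2 →₀ ℕ) : w (d + e) = w d + w e := by
  simp [w]; ring

/-- the fiber of `w` over `n`, as a Finset -/
def fib (n : ℕ) : Finset (Fin 2 →₀ ℕ) :=
  ((Finset.range (n+1) ×ˢ Finset.range (n+1)).image fun p => fs p.1 p.2).filter
    (fun d => w d = n)

lemma mem_fib {n : ℕ} {d : Fin 2 →₀ ℕ} : d ∈ fib n ↔ w d = n := by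
  constructor
  · intro h; exact (Finset.mem_filter.mp h).2
  · intro h
    refine Finset.mem_filter.mpr ⟨Finset.mem_image.mpr ⟨(d 0, d 1), ?_, (eq_fs d).symm⟩, h⟩
    simp only [Finset.mem_product, Finset.mem_range]
    unfold w at h
    omega

end CuspAux

namespace CuspAux
variable (k : Type) [Field k]

lemma key_mul (F G : MvPowerSeries (Fin 2) k) (n : ℕ) :
    ∑ d ∈ fib n, ∑ p ∈ Finset.HasAntidiagonal.antidiagonal d,
        MvPowerSeries.coeff p.1 F * MvPowerSeries.coeff p.2 G
    = ∑ ij ∈ Finset.HasAntidiagonal.antidiagonal n, ∑ de ∈ fib ij.1 ×ˢ fib ij.2,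
        MvPowerSeries.coeff de.1 F * MvPowerSeries.coeff de.2 G := by
  rw [Finset.sum_sigma', Finset.sum_sigma']
  refine Finset.sum_nbij' (i := fun x => ⟨(w x.2.1, w x.2.2), x.2⟩)
    (j := fun x => ⟨x.2.1 + x.2.2, x.2⟩) ?_ ?_ ?_ ?_ ?_
  · rintro ⟨d, p⟩ hx
    simp only [Finset.mem_sigma, mem_fib, Finset.HasAntidiagonal.mem_antidiagonal] at hx
    simp only [Finset.mem_sigma, Finset.HasAntidiagonal.mem_antidiagonal, Finset.mem_product, mem_fib]
    exact ⟨by rw [← w_add, hx.2, hx.1], ⟨trivial, trivial⟩⟩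
  · rintro ⟨ij, de⟩ hx
    simp only [Finset.mem_sigma, Finset.HasAntidiagonal.mem_antidiagonal, Finset.mem_product, mem_fib] at hx
    simp only [Finset.mem_sigma, mem_fib, Finset.HasAntidiagonal.mem_antidiagonal]
    exact ⟨by rw [w_add, hx.2.1, hx.2.2, hx.1], trivial⟩
  · rintro ⟨d, p⟩ hx
    simp only [Finset.mem_sigma, mem_fib, Finset.HasAntidiagonal.mem_antidiagonal] at hx
    simp only [Sigma.mk.inj_iff, heq_eq_eq, and_true]
    exact hx.2
  · rintro ⟨ij, de⟩ hx
    simp only [Finset.mem_sigma, Finset.HasAntidiagonal.mem_antidiagonal, Finset.mem_product, mem_fib] at hx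
    simp only [Sigma.mk.inj_iff, heq_eq_eq, and_true]
    rw [hx.2.1, hx.2.2]
  · rintro ⟨d, p⟩ _; rfl

/-- The substitution homomorphism `k[[x,y]] → k[[t]]`, `x ↦ t², y ↦ t³`. -/
def phi : MvPowerSeries (Fin 2) k →+* PowerSeries k where
  toFun F := PowerSeries.mk fun n => ∑ d ∈ fib n, MvPowerSeries.coeff d F
  map_zero' := by ext n; simp
  map_one' := by
    ext n
    simp only [coeff_mk, MvPowerSeries.coeff_one, PowerSeries.coeff_one]
    rw [Finset.sum_ite_eq' (fib n) 0 (fun _ => (1 : k))]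
    by_cases h : n = 0
    · subst h; simp [mem_fib, w]
    · simp only [h, if_false]
      rw [if_neg]
      intro hc
      rw [mem_fib] at hc
      simp [w] at hc
      exact h hc.symm
  map_add' F G := by ext n; simp [Finset.sum_add_distrib]
  map_mul' F G := by
    ext n
    simp only [coeff_mk, PowerSeries.coeff_mul, MvPowerSeries.coeff_mul]
    rw [key_mul]
    refine Finset.sum_congr rfl fun ij _ => ?_
    rw [Finset.sum_mul_sum]
    rw [Finset.sum_product]

@[simp] lemma coeff_phi (F : MvPowerSeries (Fin 2) k) (n : ℕ) :
    PowerSeries.coeff n (phi k F) = ∑ d ∈ fib n, MvPowerSeries.coeff d F := by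
  simp [phi]

end CuspAux

namespace CuspAux
variable (k : Type) [Field k]

lemma sum_fib_single (n : ℕ) (d₀ : Fin 2 →₀ ℕ) (c : k) :
    (∑ d ∈ fib n, if d = d₀ then c else 0) = if w d₀ = n then c else 0 := by
  rw [Finset.sum_ite_eq' (fib n) d₀ (fun _ => c)]
  by_cases h : w d₀ = n
  · rw [if_pos (mem_fib.mpr h), if_pos h]
  · rw [if_neg (fun hc => h (mem_fib.mp hc)), if_neg h]

lemma phi_X0 : phi k (MvPowerSeries.X 0) = (X : k⟦X⟧) ^ 2 := by
  ext n
  rw [coeff_phi, PowerSeries.coeff_X_pow]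
  simp_rw [MvPowerSeries.coeff_X]
  rw [sum_fib_single]
  have : w (Finsupp.single (0 : Fin 2) 1) = 2 := by simp [w]
  rw [this]
  by_cases h : n = 2
  · simp [h]
  · rw [if_neg (fun hc => h hc.symm), if_neg h]

lemma phi_X1 : phi k (MvPowerSeries.X 1) = (X : k⟦X⟧) ^ 3 := by
  ext n
  rw [coeff_phi, PowerSeries.coeff_X_pow]
  simp_rw [MvPowerSeries.coeff_X]
  rw [sum_fib_single]
  have : w (Finsupp.single (1 : Fin 2) 1) = 3 := by simp [w]
  rw [this]
  by_cases h : n = 3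
  · simp [h]
  · rw [if_neg (fun hc => h hc.symm), if_neg h]

lemma phi_C (c : k) : phi k ((MvPowerSeries.C c : MvPowerSeries (Fin 2) k)) = PowerSeries.C c := by
  ext n
  rw [coeff_phi]
  simp_rw [MvPowerSeries.coeff_C]
  rw [sum_fib_single]
  have : w (0 : Fin 2 →₀ ℕ) = 0 := by simp [w]
  rw [this, PowerSeries.coeff_C]
  by_cases h : n = 0
  · simp [h]
  · rw [if_neg (fun hc => h hc.symm), if_neg h]

/-- coefficient of `t¹` in anything in the range of `phi` is zero -/
lemma coeff_one_phi (F : MvPowerSeries (Fin 2) k) : PowerSeries.coeff 1 (phi k F) = 0 := by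
  rw [coeff_phi]
  have : fib 1 = (∅ : Finset (Fin 2 →₀ ℕ)) := by
    ext d; simp only [mem_fib, Finset.notMem_empty, iff_false]
    unfold w; omega
  rw [this, Finset.sum_empty]

end CuspAux

namespace CuspAux
variable (k : Type) [Field k]

/-- preimage under `phi` of a series with vanishing `t¹`-coefficient -/
def pre (f : k⟦X⟧) : MvPowerSeries (Fin 2) k := fun d =>
  if d 1 = 0 then PowerSeries.coeff (2 * d 0) f
  else if d 1 = 1 then PowerSeries.coeff (2 * d 0 + 3) f else 0

lemma phi_pre (f : k⟦X⟧) (hf : PowerSeries.coeff 1 f = 0) : phi k (pre k f) = f := by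
  ext n
  rw [coeff_phi]
  by_cases h1 : n = 1
  · subst h1
    rw [hf]
    have : fib 1 = (∅ : Finset (Fin 2 →₀ ℕ)) := by
      ext d; simp only [mem_fib, Finset.notMem_empty, iff_false]; unfold w; omega
    rw [this, Finset.sum_empty]
  · have hdisj : n % 2 = 0 ∨ ¬ (n % 2 = 0) := em _
    set dstar : Fin 2 →₀ ℕ := if n % 2 = 0 then fs (n/2) 0 else fs ((n-3)/2) 1 with hd
    have hmem : dstar ∈ fib n := by
      rw [mem_fib, hd]
      rcases hdisj with hp | hp
      · rw [if_pos hp, w_fs]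
        omega
      · rw [if_neg hp, w_fs]
        omega
    rw [Finset.sum_eq_single dstar]
    · rw [hd]
      rcases hdisj with hp | hp
      · rw [if_pos hp, MvPowerSeries.coeff_apply]
        unfold pre
        rw [if_pos (fs_apply1 _ _), fs_apply0]
        have e : 2 * (n / 2) = n := by omega
        rw [e]
      · rw [if_neg hp, MvPowerSeries.coeff_apply]
        unfold pre
        rw [fs_apply1, fs_apply0, if_neg one_ne_zero, if_pos rfl]
        have e : 2 * ((n - 3) / 2) + 3 = n := by omega
        rw [e]
    · intro b hb hbne
      rw [mem_fib] at hb
      rw [MvPowerSeries.coeff_apply]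
      unfold pre
      unfold w at hb
      rcases (by omega : b 1 = 0 ∨ b 1 = 1 ∨ 2 ≤ b 1) with h0 | h0 | h0
      · exfalso
        apply hbne
        rw [hd, if_pos (by omega : n % 2 = 0), eq_fs b, h0]
        congr 1
        omega
      · exfalso
        apply hbne
        rw [hd, if_neg (by omega : ¬ n % 2 = 0), eq_fs b, h0]
        congr 1
        omega
      · rw [if_neg (by omega), if_neg (by omega)]
    · exact fun hc => absurd hmem hc

lemma range_phi : ∀ g : k⟦X⟧, (g ∈ Set.range (phi k) ↔ PowerSeries.coeff 1 g = 0) := by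
  intro g
  constructor
  · rintro ⟨F, rfl⟩; exact coeff_one_phi k F
  · intro h; exact ⟨pre k g, phi_pre k g h⟩

end CuspAux

namespace CuspAux
variable (k : Type) [Field k]

lemma coeff_congr (F : MvPowerSeries (Fin 2) k) {d d' : Fin 2 →₀ ℕ} (h : d = d') :
    MvPowerSeries.coeff d F = MvPowerSeries.coeff d' F := by rw [h]

lemma fs_congr {a b a' b' : ℕ} (h1 : a = a') (h2 : b = b') : fs a b = fs a' b' := by rw [h1, h2]

/-- The relation of the cusp. -/
abbrev E : MvPowerSeries (Fin 2) k := MvPowerSeries.X 1 ^ 2 - MvPowerSeries.X 0 ^ 3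

lemma phi_E : phi k (E k) = 0 := by
  rw [map_sub, map_pow, map_pow, phi_X0, phi_X1]
  ring

/-- candidate quotient of `F` by `E` -/
def qt (F : MvPowerSeries (Fin 2) k) : MvPowerSeries (Fin 2) k := fun d =>
  ∑ i ∈ Finset.range (d 0 / 3 + 1),
    MvPowerSeries.coeff (fs (d 0 - 3 * i) (d 1 + 2 * i + 2)) F

lemma coeff_qt (F : MvPowerSeries (Fin 2) k) (a b : ℕ) :
    MvPowerSeries.coeff (fs a b) (qt k F)
      = ∑ i ∈ Finset.range (a / 3 + 1),
          MvPowerSeries.coeff (fs (a - 3 * i) (b + 2 * i + 2)) F := by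
  rw [MvPowerSeries.coeff_apply]
  unfold qt
  simp only [fs_apply0, fs_apply1]

lemma fib_sum (F : MvPowerSeries (Fin 2) k) (a b : ℕ) (hb : b < 2) :
    ∑ d ∈ fib (2*a+3*b), MvPowerSeries.coeff d F
      = ∑ i ∈ Finset.range (a/3+1), MvPowerSeries.coeff (fs (a-3*i) (b+2*i)) F := by
  refine Finset.sum_nbij' (i := fun d => (d 1 - b)/2) (j := fun i => fs (a-3*i) (b+2*i))
    ?_ ?_ ?_ ?_ ?_
  · intro d hd; rw [mem_fib] at hd; unfold w at hd
    simp only [Finset.mem_range]; omega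
  · intro i hi; simp only [Finset.mem_range] at hi
    rw [mem_fib, w_fs]; omega
  · intro d hd; rw [mem_fib] at hd; unfold w at hd
    show fs (a - 3*((d 1 - b)/2)) (b + 2*((d 1 - b)/2)) = d
    have h1 : a - 3*((d 1 - b)/2) = d 0 := by omega
    have h2 : b + 2*((d 1 - b)/2) = d 1 := by omega
    rw [h1, h2]; exact (eq_fs d).symm
  · intro i hi; simp only [Finset.mem_range] at hi
    show (fs (a-3*i) (b+2*i) 1 - b)/2 = i
    rw [fs_apply1]; omega
  · intro d hd; rw [mem_fib] at hd; unfold w at hd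
    show MvPowerSeries.coeff d F
      = MvPowerSeries.coeff (fs (a - 3*((d 1 - b)/2)) (b + 2*((d 1 - b)/2))) F
    refine coeff_congr k F ?_
    have h1 : a - 3*((d 1 - b)/2) = d 0 := by omega
    have h2 : b + 2*((d 1 - b)/2) = d 1 := by omega
    rw [h1, h2]; exact eq_fs d

lemma fs_sub_single1 (a b : ℕ) : fs a b - Finsupp.single 1 2 = fs a (b - 2) := by
  ext i; rw [Finsupp.tsub_apply]; fin_cases i <;> simp [fs]

lemma fs_sub_single0 (a b : ℕ) : fs a b - Finsupp.single 0 3 = fs (a - 3) b := by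
  ext i; rw [Finsupp.tsub_apply]; fin_cases i <;> simp [fs]

lemma eq_E_mul_of_phi_eq_zero (F : MvPowerSeries (Fin 2) k) (hF : phi k F = 0) :
    F = E k * qt k F := by
  have main : ∀ a b : ℕ, MvPowerSeries.coeff (fs a b) (E k * qt k F)
      = MvPowerSeries.coeff (fs a b) F := by
    intro a b
    have hphi : ∑ d ∈ fib (2*a+3*b), MvPowerSeries.coeff d F = 0 := by
      have := congrArg (PowerSeries.coeff (2*a+3*b)) hF
      rw [coeff_phi] at this
      simpa using this
    have succ' : ∑ i ∈ Finset.range (a/3+1), MvPowerSeries.coeff (fs (a-3*i) (b+2*i)) F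
        = (∑ i ∈ Finset.range (a/3),
            MvPowerSeries.coeff (fs (a-3*(i+1)) (b+2*(i+1))) F)
          + MvPowerSeries.coeff (fs (a-3*0) (b+2*0)) F :=
      Finset.sum_range_succ' _ _
    have f0eq : MvPowerSeries.coeff (fs (a-3*0) (b+2*0)) F
        = MvPowerSeries.coeff (fs a b) F :=
      coeff_congr k F (fs_congr (by omega) (by omega))
    rw [sub_mul, map_sub, MvPowerSeries.X_pow_eq, MvPowerSeries.X_pow_eq,
      MvPowerSeries.coeff_monomial_mul, MvPowerSeries.coeff_monomial_mul]
    by_cases hb : 2 ≤ b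
    · rw [if_pos (Finsupp.single_le_iff.mpr (by rw [fs_apply1]; exact hb)), one_mul,
        fs_sub_single1, coeff_qt]
      have s1 : ∑ i ∈ Finset.range (a / 3 + 1),
            MvPowerSeries.coeff (fs (a - 3 * i) (b - 2 + 2 * i + 2)) F
          = ∑ i ∈ Finset.range (a / 3 + 1),
            MvPowerSeries.coeff (fs (a - 3 * i) (b + 2 * i)) F :=
        Finset.sum_congr rfl fun i _ => coeff_congr k F (fs_congr rfl (by omega))
      rw [s1]
      by_cases ha : 3 ≤ a
      · rw [if_pos (Finsupp.single_le_iff.mpr (by rw [fs_apply0]; exact ha)), one_mul,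
          fs_sub_single0, coeff_qt]
        have hr : (a - 3) / 3 + 1 = a / 3 := by omega
        rw [hr]
        have s2 : ∑ i ∈ Finset.range (a / 3),
              MvPowerSeries.coeff (fs (a - 3 - 3 * i) (b + 2 * i + 2)) F
            = ∑ i ∈ Finset.range (a / 3),
              MvPowerSeries.coeff (fs (a - 3 * (i+1)) (b + 2 * (i+1))) F :=
          Finset.sum_congr rfl fun i _ => coeff_congr k F (fs_congr (by omega) (by omega))
        rw [s2, succ', add_sub_cancel_left]
        exact f0eq
      · rw [if_neg (fun hc => ha (by simpa using Finsupp.single_le_iff.mp hc)), sub_zero]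
        have hr : a / 3 + 1 = 1 := by omega
        rw [hr, Finset.sum_range_one]
        exact coeff_congr k F (fs_congr (by omega) (by omega))
    · rw [if_neg (fun hc => hb (by simpa using Finsupp.single_le_iff.mp hc)), zero_sub]
      rw [fib_sum k F a b (by omega)] at hphi
      rw [Finset.sum_range_succ'
        (fun i => MvPowerSeries.coeff (fs (a - 3*i) (b + 2*i)) F) (a/3)] at hphi
      by_cases ha : 3 ≤ a
      · rw [if_pos (Finsupp.single_le_iff.mpr (by rw [fs_apply0]; exact ha)), one_mul,
          fs_sub_single0, coeff_qt]
        have hr : (a - 3) / 3 + 1 = a / 3 := by omega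
        rw [hr]
        have s2 : ∑ i ∈ Finset.range (a / 3),
              MvPowerSeries.coeff (fs (a - 3 - 3 * i) (b + 2 * i + 2)) F
            = ∑ i ∈ Finset.range (a / 3),
              MvPowerSeries.coeff (fs (a - 3 * (i+1)) (b + 2 * (i+1))) F :=
          Finset.sum_congr rfl fun i _ => coeff_congr k F (fs_congr (by omega) (by omega))
        rw [s2]
        rw [f0eq] at hphi
        linear_combination -hphi
      · rw [if_neg (fun hc => ha (by simpa using Finsupp.single_le_iff.mp hc)), neg_zero]
        rw [f0eq] at hphi
        have hr : a / 3 = 0 := by omega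
        rw [hr, Finset.range_zero, Finset.sum_empty, zero_add] at hphi
        exact hphi.symm
  ext d
  rw [eq_fs d]
  exact (main (d 0) (d 1)).symm

end CuspAux

namespace CuspAux
variable (k : Type) [Field k]

lemma phi_eq_zero_iff (F : MvPowerSeries (Fin 2) k) :
    phi k F = 0 ↔ F ∈ Ideal.span {E k} := by
  constructor
  · intro h
    rw [Ideal.mem_span_singleton]
    exact ⟨qt k F, eq_E_mul_of_phi_eq_zero k F h⟩
  · intro h
    rw [Ideal.mem_span_singleton] at h
    obtain ⟨c, rfl⟩ := h
    rw [map_mul, phi_E, zero_mul]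

/-- The induced embedding `k[[x,y]]/(y²-x³) → k[[t]]`. -/
def rho : (MvPowerSeries (Fin 2) k ⧸ Ideal.span {E k}) →+* k⟦X⟧ :=
  Ideal.Quotient.lift _ (phi k) (fun F hF => (phi_eq_zero_iff k F).mpr hF)

lemma rho_mk (F : MvPowerSeries (Fin 2) k) :
    rho k (Ideal.Quotient.mk _ F) = phi k F := rfl

lemma rho_injective : Function.Injective (rho k) := by
  rw [injective_iff_map_eq_zero]
  intro a ha
  obtain ⟨F, rfl⟩ := Ideal.Quotient.mk_surjective a
  rw [rho_mk] at ha
  rw [Ideal.Quotient.eq_zero_iff_mem]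
  exact (phi_eq_zero_iff k F).mp ha

lemma coeff_one_rho (r : MvPowerSeries (Fin 2) k ⧸ Ideal.span {E k}) :
    PowerSeries.coeff 1 (rho k r) = 0 := by
  obtain ⟨F, rfl⟩ := Ideal.Quotient.mk_surjective r
  rw [rho_mk]
  exact coeff_one_phi k F

lemma rho_surj (g : k⟦X⟧) (hg : PowerSeries.coeff 1 g = 0) :
    ∃ r, rho k r = g :=
  ⟨Ideal.Quotient.mk _ (pre k g), by rw [rho_mk]; exact phi_pre k g hg⟩

lemma rho_mkX0 : rho k (Ideal.Quotient.mk _ (MvPowerSeries.X 0)) = (X : k⟦X⟧) ^ 2 := by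
  rw [rho_mk, phi_X0]

lemma rho_mkX1 : rho k (Ideal.Quotient.mk _ (MvPowerSeries.X 1)) = (X : k⟦X⟧) ^ 3 := by
  rw [rho_mk, phi_X1]

lemma rho_mkC (c : k) :
    rho k (Ideal.Quotient.mk _ ((MvPowerSeries.C c : MvPowerSeries (Fin 2) k))) = PowerSeries.C c := by
  rw [rho_mk, phi_C]

lemma cusp_isDomain : IsDomain (MvPowerSeries (Fin 2) k ⧸ Ideal.span {E k}) :=
  Function.Injective.isDomain (rho k) (rho_injective k)

/-- Splitting `k[[t]] = S + t·S`. -/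
lemma split (f : k⟦X⟧) : ∃ r1 r2, f = rho k r1 + X * rho k r2 := by
  set g1 : k⟦X⟧ := PowerSeries.C (PowerSeries.coeff 0 f)
      + PowerSeries.monomial 2 (PowerSeries.coeff 2 f) with hg1
  set g2 : k⟦X⟧ := PowerSeries.mk (fun n =>
      if n = 1 then 0 else if n = 0 then PowerSeries.coeff 1 f
      else PowerSeries.coeff (n+1) f) with hg2
  have h1 : PowerSeries.coeff 1 g1 = 0 := by
    rw [hg1, map_add, PowerSeries.coeff_C, PowerSeries.coeff_monomial]
    norm_num
  have h2 : PowerSeries.coeff 1 g2 = 0 := by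
    rw [hg2, coeff_mk]
    norm_num
  obtain ⟨r1, hr1⟩ := rho_surj k g1 h1
  obtain ⟨r2, hr2⟩ := rho_surj k g2 h2
  refine ⟨r1, r2, ?_⟩
  rw [hr1, hr2]
  ext n
  rw [map_add, hg1, map_add, PowerSeries.coeff_C, PowerSeries.coeff_monomial]
  match n with
  | 0 => simp
  | (m+1) =>
    rw [PowerSeries.coeff_succ_X_mul, hg2, coeff_mk]
    match m with
    | 0 => norm_num
    | 1 => norm_num
    | (l+2) =>
      rw [if_neg (by omega), if_neg (by omega), if_neg (by omega), if_neg (by omega)]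
      rw [zero_add, zero_add]

end CuspAux

namespace CuspAux
variable (k : Type) [Field k]

lemma coeff_one_mul (p q : k⟦X⟧) :
    PowerSeries.coeff 1 (p * q) =
      PowerSeries.coeff 0 p * PowerSeries.coeff 1 q
        + PowerSeries.coeff 1 p * PowerSeries.coeff 0 q := by
  rw [PowerSeries.coeff_mul]
  have : Finset.HasAntidiagonal.antidiagonal (1:ℕ) = {(0,1),(1,0)} := rfl
  rw [this]
  simp

lemma dvd_of_order_le {f g : k⟦X⟧} (hf : f ≠ 0) (h : f.order ≤ g.order) : f ∣ g := by
  by_cases hg : g = 0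
  · simp [hg]
  have hfo : f.order < ⊤ := PowerSeries.order_finite_iff_ne_zero.mpr hf
  set v := f.order.lift hfo with hv
  have hXv : (X : k⟦X⟧)^v ∣ g := by
    rw [PowerSeries.X_pow_dvd_iff]
    intro m hm
    apply PowerSeries.coeff_of_lt_order
    calc (m : ℕ∞) < (v : ℕ∞) := by exact_mod_cast hm
    _ = f.order := by rw [hv, ENat.coe_lift]
    _ ≤ g.order := h
  have hvt : v = f.order.toNat :=
    ENat.coe_inj.mp (by rw [ENat.coe_lift, PowerSeries.coe_toNat_order hf])
  have h1 : f = X^v * PowerSeries.divXPowOrder f := by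
    rw [hvt]; exact PowerSeries.X_pow_order_mul_divXPowOrder.symm
  obtain ⟨u, hu⟩ : IsUnit (PowerSeries.divXPowOrder f) :=
    PowerSeries.isUnit_iff_constantCoeff.mpr
      (isUnit_iff_ne_zero.mpr (PowerSeries.constantCoeff_divXPowOrder_eq_zero_iff.not.mpr hf))
  have hfX : f ∣ (X : k⟦X⟧)^v := ⟨↑u⁻¹, by rw [h1, ← hu, mul_assoc, Units.mul_inv, mul_one]⟩
  exact hfX.trans hXv

end CuspAux


theorem stmt_2
    (k : Type) [Field k]
    (M : Type) [AddCommGroup M] [Module (CuspRing k) M] [Module.Finite (CuspRing k) M]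
    -- `M` is torsion free:
    (htf : ∀ r ∈ nonZeroDivisors (CuspRing k), ∀ m : M, r • m = 0 → m = 0)
    -- `K` is the fraction field of `R` (a one-dimensional local domain) and `MK` the
    -- localization of `M` at the non-zerodivisors, i.e. `M ⊗_R Frac R`:
    (K : Type) [CommRing K] [Algebra (CuspRing k) K] [IsFractionRing (CuspRing k) K]
    (MK : Type) [AddCommGroup MK] [Module (CuspRing k) MK] [Module K MK]
    [IsScalarTower (CuspRing k) K MK]
    (f : M →ₗ[CuspRing k] MK) [IsLocalizedModule (nonZeroDivisors (CuspRing k)) f]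
    -- `M` has rank 1: `M ⊗_R Frac R` is one-dimensional over `Frac R`:
    (hrk : Module.finrank K MK = 1) :
    Nonempty (M ≃ₗ[CuspRing k] CuspRing k) ∨
      Nonempty (M ≃ₗ[CuspRing k] (Ideal.span {cuspX k, cuspY k} : Ideal (CuspRing k))) := by
  classical
  letI : IsDomain (CuspRing k) := CuspAux.cusp_isDomain k
  letI : Field K := IsFractionRing.toField (CuspRing k)
  set ρ := CuspAux.rho k with hρdef
  have hρinj : Function.Injective ρ := CuspAux.rho_injective k
  -- MK is nontrivial
  have hMKnontriv : Nontrivial MK := by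
    by_contra hM
    rw [not_nontrivial_iff_subsingleton] at hM
    rw [Module.finrank_zero_of_subsingleton] at hrk
    exact zero_ne_one hrk
  -- f is injective
  have hfinj : Function.Injective f := by
    intro x y hxy
    have h0 : f (x - y) = 0 := by rw [map_sub, hxy, sub_self]
    obtain ⟨s, hs⟩ :=
      (IsLocalizedModule.eq_zero_iff (nonZeroDivisors (CuspRing k)) f).mp h0
    have hs' : (s : CuspRing k) • (x - y) = 0 := hs
    have := htf s s.2 (x - y) hs'
    exact sub_eq_zero.mp this
  -- MK ≃ K
  haveI : FiniteDimensional K MK := FiniteDimensional.of_finrank_eq_succ hrk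
  obtain ⟨e1⟩ : Nonempty (MK ≃ₗ[K] K) :=
    FiniteDimensional.nonempty_linearEquiv_of_finrank_eq
      (by rw [hrk, Module.finrank_self])
  set g : M →ₗ[CuspRing k] K :=
    ((e1.restrictScalars (CuspRing k)).toLinearMap).comp f with hgdef
  have hginj : Function.Injective g :=
    (e1.restrictScalars (CuspRing k)).injective.comp hfinj
  -- clear denominators
  obtain ⟨s, hs⟩ := Module.Finite.fg_top (R := CuspRing k) (M := M)
  obtain ⟨b, hb⟩ :=
    IsLocalization.exist_integer_multiples (nonZeroDivisors (CuspRing k)) s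
      (fun m : M => g m)
  set h : M →ₗ[CuspRing k] K := (b : CuspRing k) • g with hhdef
  have habne : algebraMap (CuspRing k) K (b : CuspRing k) ≠ 0 :=
    IsFractionRing.to_map_ne_zero_of_mem_nonZeroDivisors b.2
  have hval : ∀ m : M, h m = algebraMap (CuspRing k) K (b : CuspRing k) * g m := by
    intro m
    rw [hhdef, LinearMap.smul_apply, Algebra.smul_def]
  have hmem : ∀ m : M, h m ∈ LinearMap.range (Algebra.linearMap (CuspRing k) K) := by
    have hle : (⊤ : Submodule (CuspRing k) M) ≤
        Submodule.comap h (LinearMap.range (Algebra.linearMap (CuspRing k) K)) := by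
      rw [← hs]
      refine Submodule.span_le.mpr ?_
      intro x hx
      rw [SetLike.mem_coe, Submodule.mem_comap]
      obtain ⟨r, hr⟩ := hb x hx
      exact ⟨r, by rw [hhdef]; simpa using hr⟩
    exact fun m => hle (Submodule.mem_top)
  have hinjh : Function.Injective h := by
    intro x y hxy
    apply hginj
    rw [hval, hval] at hxy
    exact mul_left_cancel₀ habne hxy
  -- the ideal I
  set I : Ideal (CuspRing k) :=
    Submodule.comap (Algebra.linearMap (CuspRing k) K) (LinearMap.range h) with hIdef
  set q : I →ₗ[CuspRing k] K :=
    (Algebra.linearMap (CuspRing k) K).comp (Submodule.subtype I) with hqdef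
  have hqinj : Function.Injective q := by
    intro x y hxy
    exact Subtype.ext (IsFractionRing.injective (CuspRing k) K hxy)
  have hrangeq : LinearMap.range q = LinearMap.range h := by
    apply le_antisymm
    · rintro _ ⟨⟨x, hx⟩, rfl⟩
      exact hx
    · rintro _ ⟨m, rfl⟩
      obtain ⟨r, hr⟩ := hmem m
      refine ⟨⟨r, ?_⟩, hr⟩
      rw [Submodule.mem_comap]
      exact hr ▸ ⟨m, rfl⟩
  have eMI : M ≃ₗ[CuspRing k] I :=
    (LinearEquiv.ofInjective h hinjh).trans
      ((LinearEquiv.ofEq _ _ hrangeq.symm).trans (LinearEquiv.ofInjective q hqinj).symm)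
  -- M is nontrivial
  have hMnontriv : Nontrivial M := by
    by_contra hM
    rw [not_nontrivial_iff_subsingleton] at hM
    obtain ⟨u, v, huv⟩ := hMKnontriv
    apply huv
    have key : ∀ z : MK, z = 0 := by
      intro z
      obtain ⟨⟨m, t⟩, hmt⟩ := IsLocalizedModule.surj (nonZeroDivisors (CuspRing k)) f z
      have hm0 : m = 0 := Subsingleton.elim _ _
      rw [hm0, map_zero] at hmt
      have hmt' : (t : CuspRing k) • z = 0 := hmt
      have ht : algebraMap (CuspRing k) K (t : CuspRing k) ≠ 0 :=
        IsFractionRing.to_map_ne_zero_of_mem_nonZeroDivisors t.2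
      have hz : algebraMap (CuspRing k) K (t : CuspRing k) • z = 0 := by
        rw [algebraMap_smul]; exact hmt'
      calc z = (algebraMap (CuspRing k) K (t : CuspRing k))⁻¹ •
                (algebraMap (CuspRing k) K (t : CuspRing k) • z) := by
              rw [smul_smul, inv_mul_cancel₀ ht, one_smul]
      _ = 0 := by rw [hz, smul_zero]
    rw [key u, key v]
  -- a nonzero element of I of minimal order
  obtain ⟨m₀, hm₀⟩ := exists_ne (0 : M)
  have hx₀ : ((eMI m₀ : I) : CuspRing k) ≠ 0 := by
    intro hc
    exact hm₀ (eMI.map_eq_zero_iff.mp (Subtype.ext hc))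
  have hρne : ∀ x : CuspRing k, x ≠ 0 → ρ x ≠ 0 :=
    fun x hx hc => hx (hρinj (by rw [hc, map_zero]))
  set P : ℕ → Prop := fun n => ∃ x, x ∈ I ∧ x ≠ 0 ∧ (ρ x).order = (n : ℕ∞) with hPdef
  have hP : ∃ n, P n := by
    have hfin : (ρ ((eMI m₀ : I) : CuspRing k)).order < ⊤ :=
      PowerSeries.order_finite_iff_ne_zero.mpr (hρne _ hx₀)
    exact ⟨(ρ ((eMI m₀ : I) : CuspRing k)).order.lift hfin,
      ((eMI m₀ : I) : CuspRing k), (eMI m₀).2, hx₀, by rw [ENat.coe_lift]⟩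
  obtain ⟨a, haI, ha0, hord⟩ := Nat.find_spec hP
  have hmin : ∀ x, x ∈ I → x ≠ 0 → ((Nat.find hP : ℕ) : ℕ∞) ≤ (ρ x).order := by
    intro x hx hx0
    by_contra hlt
    push_neg at hlt
    have hfin : (ρ x).order < ⊤ := lt_trans hlt (WithTop.coe_lt_top _)
    exact Nat.find_min hP ((ENat.lift_lt_iff (h := hfin)).mpr hlt) ⟨x, hx, hx0, by rw [ENat.coe_lift]⟩
  have hρa : ρ a ≠ 0 := hρne a ha0
  have hdvd : ∀ x, x ∈ I → ∃ c, ρ x = ρ a * c := by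
    intro x hx
    by_cases hx0 : x = 0
    · exact ⟨0, by simp [hx0]⟩
    · obtain ⟨c, hc⟩ := CuspAux.dvd_of_order_le k (g := ρ x) hρa
        (by rw [hord]; exact hmin x hx hx0)
      exact ⟨c, hc⟩
  by_cases hcase : ∀ x ∈ I, a ∣ x
  · -- M ≃ R
    left
    set μ : CuspRing k →ₗ[CuspRing k] I :=
      { toFun := fun r => ⟨a * r, Ideal.mul_mem_right r I haI⟩
        map_add' := by intro r r'; apply Subtype.ext; simp [mul_add]
        map_smul' := by
          intro r x; apply Subtype.ext
          simp only [smul_eq_mul, RingHom.id_apply, Submodule.coe_smul]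
          ring } with hμdef
    have hμbij : Function.Bijective μ := by
      constructor
      · intro r r' hrr
        exact mul_left_cancel₀ ha0 (congrArg Subtype.val hrr)
      · rintro ⟨x, hx⟩
        obtain ⟨r, rfl⟩ := hcase x hx
        exact ⟨r, rfl⟩
    exact ⟨eMI.trans (LinearEquiv.ofBijective μ hμbij).symm⟩
  · -- M ≃ (x, y)
    right
    push_neg at hcase
    obtain ⟨x₂, hx₂I, hx₂nd⟩ := hcase
    obtain ⟨c, hc⟩ := hdvd x₂ hx₂I
    have hc1 : PowerSeries.coeff 1 c ≠ 0 := by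
      intro hc1
      obtain ⟨r', hr'⟩ := CuspAux.rho_surj k c hc1
      exact hx₂nd ⟨r', hρinj (by rw [map_mul, hr', hc])⟩
    set c0 := PowerSeries.coeff 0 c with hc0def
    set c1 := PowerSeries.coeff 1 c with hc1def
    set gq : PowerSeries k := PowerSeries.mk fun n => PowerSeries.coeff (n+2) c with hgqdef
    have hdd : ∀ m < 2, PowerSeries.coeff m ((PowerSeries.X)^2 * gq) = 0 :=
      PowerSeries.X_pow_dvd_iff.mp (dvd_mul_right _ _)
    have hcdec : c = PowerSeries.C c0 + PowerSeries.C c1 * PowerSeries.X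
        + (PowerSeries.X)^2 * gq := by
      ext n
      rw [map_add, map_add, PowerSeries.coeff_C, PowerSeries.coeff_C_mul,
        PowerSeries.coeff_X]
      match n with
      | 0 => rw [hdd 0 (by norm_num)]; simp [hc0def]
      | 1 => rw [hdd 1 (by norm_num)]; simp [hc1def]
      | (l+2) =>
        rw [PowerSeries.coeff_X_pow_mul gq 2 l, hgqdef, PowerSeries.coeff_mk]
        rw [if_neg (by omega), if_neg (by omega)]
        ring
    obtain ⟨rg, hrg⟩ := CuspAux.rho_surj k ((PowerSeries.X)^2 * gq) (hdd 1 (by norm_num))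
    set κ : k → CuspRing k := fun z => Ideal.Quotient.mk _ ((MvPowerSeries.C z : MvPowerSeries (Fin 2) k))
      with hκdef
    have hρκ : ∀ z, ρ (κ z) = PowerSeries.C z := fun z => CuspAux.rho_mkC k z
    set w₂ : CuspRing k := κ c1⁻¹ * (x₂ - κ c0 * a - rg * a) with hw₂def
    have hw₂I : w₂ ∈ I :=
      Ideal.mul_mem_left _ _
        (I.sub_mem (I.sub_mem hx₂I (Ideal.mul_mem_left _ _ haI)) (Ideal.mul_mem_left _ _ haI))
    have hρw₂ : ρ w₂ = PowerSeries.X * ρ a := by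
      rw [hw₂def, map_mul, map_sub, map_sub, map_mul, map_mul, hρκ, hρκ, hrg, hc]
      have e1 : ρ a * c - PowerSeries.C c0 * ρ a - (PowerSeries.X)^2 * gq * ρ a
          = PowerSeries.C c1 * (PowerSeries.X * ρ a) := by
        rw [hcdec]; ring
      rw [e1, ← mul_assoc, ← map_mul, inv_mul_cancel₀ hc1, map_one, one_mul]
    have ha1 : PowerSeries.coeff 1 (ρ a) = 0 := CuspAux.coeff_one_rho k a
    have ha0' : PowerSeries.coeff 0 (ρ a) = 0 := by
      have hw1 := CuspAux.coeff_one_rho k w₂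
      rw [hρw₂, CuspAux.coeff_one_mul] at hw1
      simpa using hw1
    have hmul1 : ∀ gy : PowerSeries k, PowerSeries.coeff 1 (ρ a * gy) = 0 := by
      intro gy
      rw [CuspAux.coeff_one_mul, ha0', ha1]
      ring
    have memI : ∀ x : CuspRing k, (∃ fx, ρ x = ρ a * fx) → x ∈ I := by
      rintro x ⟨fx, hfx⟩
      obtain ⟨r1, r2, hsplit⟩ := CuspAux.split k fx
      have : ρ x = ρ (a * r1 + w₂ * r2) := by
        rw [map_add, map_mul, map_mul, hρw₂, hfx, hsplit]; ring
      rw [hρinj this]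
      exact I.add_mem (Ideal.mul_mem_right _ _ haI) (Ideal.mul_mem_right _ _ hw₂I)
    have hρX : ρ (cuspX k) = (PowerSeries.X : PowerSeries k)^2 := CuspAux.rho_mkX0 k
    have hρY : ρ (cuspY k) = (PowerSeries.X : PowerSeries k)^3 := CuspAux.rho_mkX1 k
    set J : Ideal (CuspRing k) := Ideal.span {cuspX k, cuspY k} with hJdef
    have memJ : ∀ y : CuspRing k, y ∈ J ↔ ∃ gy, ρ y = (PowerSeries.X)^2 * gy := by
      intro y
      constructor
      · intro hy
        rw [hJdef, Ideal.mem_span_pair] at hy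
        obtain ⟨p, qq, hpq⟩ := hy
        refine ⟨ρ p + PowerSeries.X * ρ qq, ?_⟩
        rw [← hpq, map_add, map_mul, map_mul, hρX, hρY]
        ring
      · rintro ⟨gy, hgy⟩
        obtain ⟨r1, r2, hsplit⟩ := CuspAux.split k gy
        have hyeq : ρ y = ρ (cuspX k * r1 + cuspY k * r2) := by
          rw [map_add, map_mul, map_mul, hρX, hρY, hgy, hsplit]; ring
        rw [hρinj hyeq, hJdef, Ideal.mem_span_pair]
        exact ⟨r1, r2, by ring⟩
    have exθ : ∀ x : I, ∃ y : J,
        ρ a * ρ (y : CuspRing k) = (PowerSeries.X)^2 * ρ (x : CuspRing k) := by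
      rintro ⟨x, hx⟩
      obtain ⟨fx, hfx⟩ := hdvd x hx
      obtain ⟨y, hy⟩ := CuspAux.rho_surj k ((PowerSeries.X)^2 * fx)
        ((PowerSeries.X_pow_dvd_iff.mp (dvd_mul_right _ _)) 1 (by norm_num))
      refine ⟨⟨y, (memJ y).mpr ⟨fx, hy⟩⟩, ?_⟩
      simp only
      rw [hy, hfx]
      ring
    choose θ0 hθ0 using exθ
    have huniq : ∀ y y' : J,
        ρ a * ρ (y : CuspRing k) = ρ a * ρ (y' : CuspRing k) → y = y' := by
      intro y y' hyy
      exact Subtype.ext (hρinj (mul_left_cancel₀ hρa hyy))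
    set θ : I →ₗ[CuspRing k] J :=
      { toFun := θ0
        map_add' := by
          intro x x'
          apply huniq
          rw [hθ0, Submodule.coe_add, Submodule.coe_add, map_add, map_add]
          linear_combination - hθ0 x - hθ0 x'
        map_smul' := by
          intro r x
          apply huniq
          rw [RingHom.id_apply, hθ0, Submodule.coe_smul, Submodule.coe_smul,
            smul_eq_mul, smul_eq_mul, map_mul, map_mul]
          linear_combination (- ρ r) * hθ0 x } with hθdef
    have hθbij : Function.Bijective θ := by
      constructor
      · intro x x' hxx
        have h1 : ρ a * ρ ((θ0 x : CuspRing k)) = ρ a * ρ ((θ0 x' : CuspRing k)) := by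
          rw [show θ0 x = θ0 x' from hxx]
        rw [hθ0, hθ0] at h1
        have h2 : ρ (x : CuspRing k) = ρ (x' : CuspRing k) :=
          mul_left_cancel₀ (pow_ne_zero 2 PowerSeries.X_ne_zero) h1
        exact Subtype.ext (hρinj h2)
      · rintro ⟨y, hy⟩
        obtain ⟨gy, hgy⟩ := (memJ y).mp hy
        obtain ⟨x, hx⟩ := CuspAux.rho_surj k (ρ a * gy) (hmul1 gy)
        have hxI : x ∈ I := memI x ⟨gy, hx⟩
        refine ⟨⟨x, hxI⟩, ?_⟩
        apply huniq
        have hθx : θ ⟨x, hxI⟩ = θ0 ⟨x, hxI⟩ := rfl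
        rw [hθx, hθ0]
        simp only
        rw [hx, hgy]
        ring
    exact ⟨eMI.trans (LinearEquiv.ofBijective θ hθbij)⟩

end
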